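/- For positive integers l1 ≤ m1 < l2 ≤ m2, n > 1, and k ≥ 1, the number of k-element subsets X of [l1,m1] ∪ [l2,m2] with gcd(X ∪ {n}) = 1 equals the sum over divisors d of n of μ(d)·C(⌊m1/d⌋ + ⌊m2/d⌋ − ⌊(l1−1)/d⌋ − ⌊(l2−1)/d⌋, k). -/

import Mathlib

open Finset

lemma moebius_sum (g : ℕ) :
    ∑ d ∈ g.divisors, (ArithmeticFunction.moebius d : ℤ) = if g = 1 then 1 else 0 := by
  have := congrArg (fun f : ArithmeticFunction ℤ => f g)
    ArithmeticFunction.moebius_mul_coe_zeta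
  simp only [ArithmeticFunction.coe_mul_zeta_apply, ArithmeticFunction.one_apply] at this
  exact this

lemma ioc_count (a b d : ℕ) (hab : a ≤ b) :
    ((Finset.Ioc a b).filter (d ∣ ·)).card = b / d - a / d := by
  have h : (Finset.Ioc 0 b).filter (d ∣ ·) =
      (Finset.Ioc 0 a).filter (d ∣ ·) ∪ (Finset.Ioc a b).filter (d ∣ ·) := by
    rw [← filter_union, Finset.Ioc_union_Ioc_eq_Ioc (Nat.zero_le a) hab]
  have hdisj : Disjoint ((Finset.Ioc 0 a).filter (d ∣ ·)) ((Finset.Ioc a b).filter (d ∣ ·)) := by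
    simp only [Finset.disjoint_left, Finset.mem_filter, Finset.mem_Ioc]
    intro x hx hy
    omega
  have := congrArg Finset.card h
  rw [Finset.card_union_of_disjoint hdisj] at this
  rw [Nat.Ioc_filter_dvd_card_eq_div, Nat.Ioc_filter_dvd_card_eq_div] at this
  omega

theorem stmt14 (l1 m1 l2 m2 n k : ℕ) (hl1 : 0 < l1) (h1 : l1 ≤ m1) (h12 : m1 < l2)
    (h2 : l2 ≤ m2) (hn : 1 < n) (hk : 1 ≤ k) :
    (((((Finset.Icc l1 m1) ∪ (Finset.Icc l2 m2)).powerset.filter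
        (fun X => X.card = k ∧ Nat.gcd (X.gcd id) n = 1)).card : ℤ)) =
      ∑ d ∈ n.divisors, (ArithmeticFunction.moebius d) *
        (Nat.choose (m1 / d + m2 / d - (l1 - 1) / d - (l2 - 1) / d) k : ℤ) := by
  have hn0 : n ≠ 0 := by omega
  set A := (Finset.Icc l1 m1) ∪ (Finset.Icc l2 m2) with hA
  set s' := A.powerset.filter (fun X => X.card = k) with hs'
  have step1 : (((A.powerset.filter
        (fun X => X.card = k ∧ Nat.gcd (X.gcd id) n = 1)).card : ℤ)) =
      ∑ X ∈ s', (if Nat.gcd (X.gcd id) n = 1 then (1:ℤ) else 0) := by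
    rw [← Finset.filter_filter, Finset.card_filter]
    push_cast
    rfl
  have key : ∀ X : Finset ℕ, (if Nat.gcd (X.gcd id) n = 1 then (1:ℤ) else 0)
      = ∑ d ∈ n.divisors, (ArithmeticFunction.moebius d : ℤ) *
          (if d ∣ X.gcd id then 1 else 0) := by
    intro X
    have hfe : n.divisors.filter (· ∣ X.gcd id) = (Nat.gcd (X.gcd id) n).divisors := by
      ext d
      simp only [Finset.mem_filter, Nat.mem_divisors, Nat.dvd_gcd_iff]
      constructor
      · rintro ⟨⟨ha, hb⟩, hc⟩; exact ⟨⟨hc, ha⟩, Nat.gcd_ne_zero_right hn0⟩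
      · rintro ⟨⟨ha, hb⟩, hc⟩; exact ⟨⟨hb, hn0⟩, ha⟩
    rw [← moebius_sum, ← hfe, Finset.sum_filter]
    apply Finset.sum_congr rfl
    intro d _
    split <;> simp
  rw [step1]
  simp only [key]
  rw [Finset.sum_comm]
  apply Finset.sum_congr rfl
  intro d hd
  obtain ⟨hdn, -⟩ := Nat.mem_divisors.mp hd
  have hd0 : 0 < d := Nat.pos_of_mem_divisors hd
  rw [← Finset.mul_sum]
  congr 1
  have hset : s'.filter (fun X => d ∣ X.gcd id) =
      (A.filter (d ∣ ·)).powersetCard k := by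
    ext X
    simp only [hs', Finset.mem_filter, Finset.mem_powerset, Finset.mem_powersetCard]
    constructor
    · rintro ⟨⟨hXA, hXk⟩, hXd⟩
      refine ⟨fun x hx => Finset.mem_filter.mpr ⟨hXA hx, ?_⟩, hXk⟩
      exact dvd_trans hXd (by exact Finset.gcd_dvd hx)
    · rintro ⟨hXB, hXk⟩
      refine ⟨⟨fun x hx => (Finset.mem_filter.mp (hXB hx)).1, hXk⟩, ?_⟩
      exact Finset.dvd_gcd (fun x hx => (Finset.mem_filter.mp (hXB hx)).2)
  have hsum : ∑ X ∈ s', (if d ∣ X.gcd id then (1:ℤ) else 0)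
      = ((s'.filter (fun X => d ∣ X.gcd id)).card : ℤ) := by
    rw [Finset.card_filter]; push_cast; rfl
  rw [hsum, hset, Finset.card_powersetCard]
  have hl2 : 0 < l2 := by omega
  have hIcc1 : Finset.Icc l1 m1 = Finset.Ioc (l1 - 1) m1 := by
    rw [← Finset.Icc_add_one_left_eq_Ioc]; congr 1; omega
  have hIcc2 : Finset.Icc l2 m2 = Finset.Ioc (l2 - 1) m2 := by
    rw [← Finset.Icc_add_one_left_eq_Ioc]; congr 1; omega
  have hdisj : Disjoint ((Finset.Icc l1 m1).filter (d ∣ ·))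
      ((Finset.Icc l2 m2).filter (d ∣ ·)) := by
    simp only [Finset.disjoint_left, Finset.mem_filter, Finset.mem_Icc]
    intro x hx hy
    omega
  have hcard : (A.filter (d ∣ ·)).card =
      (m1 / d - (l1 - 1) / d) + (m2 / d - (l2 - 1) / d) := by
    rw [hA, Finset.filter_union, Finset.card_union_of_disjoint hdisj,
      hIcc1, hIcc2, ioc_count _ _ _ (by omega), ioc_count _ _ _ (by omega)]
  have e1 : (l1 - 1) / d ≤ m1 / d := Nat.div_le_div_right (by omega)
  have e2 : (l2 - 1) / d ≤ m2 / d := Nat.div_le_div_right (by omega)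
  rw [hcard]
  congr 2
  omega
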